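/- arXiv:1311.5081 — 5 statements merged into one kernel-verified Lean document; each statement's English description precedes it below -/
import Mathlib

section
/- Fix vertices u and v. The set of values {D_{u,v}(f) : f ∈ ℝ} ⊆ ℕ∞ has cardinality at most k + 1, where k is the number of distinct edge-capacity values |{cap(e) : e ∈ E(G)}|. (In particular it has at most m + 1 elements, where m is the number of edges; this is the paper's observation that there are only O(m) maximal flows.) -/
open SimpleGraph

/-- The cost of a walk: the sum of the edge costs over its edges. -/
def walkCost {V : Type*} (cost : Sym2 V → ℕ) {G : SimpleGraph V}
    {u v : V} (p : G.Walk u v) : ℕ :=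
  (p.edges.map cost).sum

/-- `D G cost cap u v f` : the infimum (in `ℕ∞`) of the costs of walks from
`u` to `v` that accommodate flow `f` (`⊤` if no such walk exists). -/
noncomputable def D {V : Type*} (G : SimpleGraph V) (cost : Sym2 V → ℕ)
    (cap : Sym2 V → ℝ) (u v : V) (f : ℝ) : ℕ∞ :=
  ⨅ p : {p : G.Walk u v // ∀ e ∈ p.edges, f ≤ cap e}, (walkCost cost p.1 : ℕ∞)

theorem D_congr' {V : Type*} (G : SimpleGraph V) (cost : Sym2 V → ℕ)
    (cap : Sym2 V → ℝ) (u v : V) {f₁ f₂ : ℝ}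
    (h : ∀ e ∈ G.edgeSet, (f₁ ≤ cap e ↔ f₂ ≤ cap e)) :
    D G cost cap u v f₁ = D G cost cap u v f₂ := by
  have hpred : (fun p : G.Walk u v => ∀ e ∈ p.edges, f₁ ≤ cap e)
      = (fun p : G.Walk u v => ∀ e ∈ p.edges, f₂ ≤ cap e) := by
    funext p
    exact propext (forall₂_congr fun e he => h e (p.edges_subset_edgeSet he))
  unfold D
  rw [hpred]

/-- For fixed `u, v`, the set of values `{D_{u,v}(f) : f ∈ ℝ}` has at most
`k + 1` elements, where `k` is the number of distinct edge-capacity values;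
in particular at most `m + 1` elements, where `m` is the number of edges. -/
theorem D_range_card_le {V : Type*} [Fintype V] (G : SimpleGraph V)
    (cost : Sym2 V → ℕ) (cap : Sym2 V → ℝ) (u v : V) :
    {x : ℕ∞ | ∃ f : ℝ, x = D G cost cap u v f}.Finite ∧
    {x : ℕ∞ | ∃ f : ℝ, x = D G cost cap u v f}.ncard ≤ (cap '' G.edgeSet).ncard + 1 ∧
    {x : ℕ∞ | ∃ f : ℝ, x = D G cost cap u v f}.ncard ≤ G.edgeSet.ncard + 1 := by
  set S : Set ℝ := cap '' G.edgeSet with hS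
  have hSfin : S.Finite := (Set.toFinite G.edgeSet).image cap
  set h : ℝ → Set ℝ := fun f => {c ∈ S | f ≤ c} with hh
  set g : ℝ → ℕ := fun f => (h f).ncard with hg
  have hhfin : ∀ f, (h f).Finite := fun f => hSfin.subset (fun c hc => hc.1)
  -- key: g f₁ = g f₂ → D f₁ = D f₂
  have key : ∀ f₁ f₂ : ℝ, g f₁ = g f₂ → D G cost cap u v f₁ = D G cost cap u v f₂ := by
    have main : ∀ f₁ f₂ : ℝ, f₁ ≤ f₂ → g f₁ = g f₂ →
        D G cost cap u v f₁ = D G cost cap u v f₂ := by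
      intro f₁ f₂ hle hgeq
      have hsub : h f₂ ⊆ h f₁ := fun c hc => ⟨hc.1, hle.trans hc.2⟩
      have heq : h f₂ = h f₁ :=
        Set.eq_of_subset_of_ncard_le hsub (le_of_eq hgeq) (hhfin f₁)
      refine D_congr' G cost cap u v fun e he => ?_
      have hcS : cap e ∈ S := Set.mem_image_of_mem cap he
      constructor
      · intro h1
        exact (heq ▸ (⟨hcS, h1⟩ : cap e ∈ h f₁) : cap e ∈ h f₂).2
      · intro h2
        exact ((heq ▸ (⟨hcS, h2⟩ : cap e ∈ h f₂)) : cap e ∈ h f₁).2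
    intro f₁ f₂ hgeq
    rcases le_total f₁ f₂ with hle | hle
    · exact main f₁ f₂ hle hgeq
    · exact (main f₂ f₁ hle hgeq.symm).symm
  -- define ψ
  classical
  set ψ : ℕ → ℕ∞ := fun n =>
    if hn : ∃ f, g f = n then D G cost cap u v hn.choose else ⊤ with hψ
  have hψg : ∀ f, ψ (g f) = D G cost cap u v f := by
    intro f
    have hn : ∃ f', g f' = g f := ⟨f, rfl⟩
    simp only [hψ, dif_pos hn]
    exact key _ _ hn.choose_spec
  have hT : {x : ℕ∞ | ∃ f : ℝ, x = D G cost cap u v f} = ψ '' (Set.range g) := by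
    ext x
    constructor
    · rintro ⟨f, rfl⟩
      exact ⟨g f, ⟨f, rfl⟩, hψg f⟩
    · rintro ⟨n, ⟨f, rfl⟩, rfl⟩
      exact ⟨f, (hψg f)⟩
  have hRsub : Set.range g ⊆ Set.Iic S.ncard := by
    rintro n ⟨f, rfl⟩
    exact Set.ncard_le_ncard (fun c hc => hc.1) hSfin
  have hRfin : (Set.range g).Finite := (Set.finite_Iic _).subset hRsub
  have hTfin : {x : ℕ∞ | ∃ f : ℝ, x = D G cost cap u v f}.Finite := by
    rw [hT]; exact hRfin.image ψ
  have hcard : {x : ℕ∞ | ∃ f : ℝ, x = D G cost cap u v f}.ncard ≤ S.ncard + 1 := by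
    rw [hT]
    calc (ψ '' Set.range g).ncard ≤ (Set.range g).ncard := Set.ncard_image_le hRfin
      _ ≤ (Set.Iic S.ncard).ncard := Set.ncard_le_ncard hRsub (Set.finite_Iic _)
      _ = S.ncard + 1 := by
          rw [← Finset.coe_Iic, Set.ncard_coe_finset, Nat.card_Iic]
  refine ⟨hTfin, hcard, hcard.trans ?_⟩
  have : S.ncard ≤ G.edgeSet.ncard := Set.ncard_image_le (Set.toFinite _)
  omega
end

section
/- Fix vertices u ≠ v and let A_{u,v} = {(cost(p), bottleneck(p)) : p a walk from u to v with at least one edge} ⊆ ℕ × ℝ. Then the Pareto frontier P(A_{u,v}) is finite and |P(A_{u,v})| ≤ |{cap(e) : e ∈ E(G)}| ≤ m, where m is the number of edges of G. (There are at most m useful (d, f) pairs per destination vertex.) -/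
open SimpleGraph

/-- The bottleneck of a walk (with at least one edge): the minimum capacity
over its edges. -/
noncomputable def bottleneck {V : Type*} (cap : Sym2 V → ℝ) {G : SimpleGraph V}
    {u v : V} (p : G.Walk u v) : ℝ :=
  ((p.edges.map cap).min?).getD 0

/-- The Pareto frontier of a set of (distance, flow) pairs: the pairs that are
not dominated by any other pair of the set, where `(d', f')` dominates `(d, f)`
if `(d', f') ≠ (d, f)`, `d' ≤ d` and `f' ≥ f`. -/
def Pareto (A : Set (ℕ × ℝ)) : Set (ℕ × ℝ) :=
  {x | x ∈ A ∧ ¬ ∃ y ∈ A, y ≠ x ∧ y.1 ≤ x.1 ∧ x.2 ≤ y.2}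

/-- The set of (cost, bottleneck) pairs over all walks from `u` to `v` with at
least one edge. -/
def Auv {V : Type*} (G : SimpleGraph V) (cost : Sym2 V → ℕ) (cap : Sym2 V → ℝ)
    (u v : V) : Set (ℕ × ℝ) :=
  {x | ∃ p : G.Walk u v, p.edges ≠ [] ∧ x = (walkCost cost p, bottleneck cap p)}

lemma bottleneck_mem {V : Type*} (cap : Sym2 V → ℝ) {G : SimpleGraph V}
    {u v : V} (p : G.Walk u v) (hp : p.edges ≠ []) :
    bottleneck cap p ∈ cap '' G.edgeSet := by
  have hne : (p.edges.map cap) ≠ [] := by simpa using hp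
  obtain ⟨a, ha⟩ := List.exists_mem_of_ne_nil _ hne
  obtain ⟨m, hm⟩ := Option.isSome_iff_exists.mp (List.isSome_min?_of_mem ha)
  have hmem : m ∈ p.edges.map cap := List.min?_mem hm
  obtain ⟨e, he, rfl⟩ := List.mem_map.mp hmem
  have : e ∈ G.edgeSet := p.edges_subset_edgeSet he
  have : bottleneck cap p = cap e := by simp [bottleneck, hm]
  rw [this]
  exact ⟨e, p.edges_subset_edgeSet he, rfl⟩

lemma snd_injOn_Pareto (A : Set (ℕ × ℝ)) : Set.InjOn Prod.snd (Pareto A) := by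
  rintro ⟨d, f⟩ ⟨hd, hnd⟩ ⟨d', f'⟩ ⟨hd', hnd'⟩ h
  simp only at h
  subst h
  rcases lt_trichotomy d d' with hlt | heq | hlt
  · exact absurd ⟨(d, f), hd, by simp [Prod.ext_iff, hlt.ne], hlt.le, le_rfl⟩ hnd'
  · simp [heq]
  · exact absurd ⟨(d', f), hd', by simp [Prod.ext_iff]; exact hlt.ne, hlt.le, le_rfl⟩ hnd

/-- For `u ≠ v`, the Pareto frontier of the (cost, bottleneck) pairs of walks
from `u` to `v` is finite, of size at most the number of distinct edge
capacities, which is at most the number `m` of edges. -/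
theorem Pareto_Auv_card_le {V : Type*} [Fintype V] (G : SimpleGraph V)
    (cost : Sym2 V → ℕ) (cap : Sym2 V → ℝ) {u v : V} (huv : u ≠ v) :
    (Pareto (Auv G cost cap u v)).Finite ∧
    (Pareto (Auv G cost cap u v)).ncard ≤ (cap '' G.edgeSet).ncard ∧
    (cap '' G.edgeSet).ncard ≤ G.edgeSet.ncard := by
  have hE : G.edgeSet.Finite := Set.toFinite _
  have hcapfin : (cap '' G.edgeSet).Finite := hE.image _
  have hsub : Prod.snd '' (Pareto (Auv G cost cap u v)) ⊆ cap '' G.edgeSet := by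
    rintro x ⟨⟨d, f⟩, ⟨hmem, -⟩, rfl⟩
    obtain ⟨p, hp, heq⟩ := hmem
    have := bottleneck_mem cap p hp
    rw [Prod.ext_iff] at heq
    rw [heq.2]
    exact this
  have hinj := snd_injOn_Pareto (Auv G cost cap u v)
  have hfin : (Pareto (Auv G cost cap u v)).Finite :=
    Set.Finite.of_finite_image (hcapfin.subset hsub) hinj
  refine ⟨hfin, ?_, Set.ncard_image_le hE⟩
  calc (Pareto (Auv G cost cap u v)).ncard
      = (Prod.snd '' (Pareto (Auv G cost cap u v))).ncard :=
        (Set.ncard_image_of_injOn hinj).symm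
    _ ≤ (cap '' G.edgeSet).ncard := Set.ncard_le_ncard hsub hcapfin
end

section
/- Suppose every edge of G has cost 1 (unit edge costs) and let n = |V|. Fix vertices u ≠ v and let A_{u,v} = {(length(p), bottleneck(p)) : p a walk from u to v with at least one edge} ⊆ ℕ × ℝ. Then |P(A_{u,v})| ≤ n − 1. (Even with m maximal flows, for unit edge costs the set S[v] of useful pairs has size O(n) for each destination vertex v.) -/
open SimpleGraph

private lemma real_min?_eq_some_iff (l : List ℝ) (a : ℝ) :
    l.min? = some a ↔ a ∈ l ∧ ∀ b ∈ l, a ≤ b :=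
  List.min?_eq_some_iff

private lemma bottleneck_mono {V : Type*} (cap : Sym2 V → ℝ) {G : SimpleGraph V} {u v : V}
    (p q : G.Walk u v) (hq : q.edges ≠ []) (hsub : q.edges ⊆ p.edges) :
    bottleneck cap p ≤ bottleneck cap q := by
  have hq' : (q.edges.map cap) ≠ [] := by simpa using hq
  have hp' : (p.edges.map cap) ≠ [] := by
    obtain ⟨e, he⟩ := List.exists_mem_of_ne_nil _ hq
    have : e ∈ p.edges := hsub he
    simp only [ne_eq, List.map_eq_nil_iff]
    exact fun h => by simp [h] at this
  obtain ⟨m, hm⟩ : ∃ m, (p.edges.map cap).min? = some m := by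
    cases h : (p.edges.map cap).min? with
    | none => exact absurd (List.min?_eq_none_iff.mp h) hp'
    | some m => exact ⟨m, rfl⟩
  obtain ⟨m', hm'⟩ : ∃ m', (q.edges.map cap).min? = some m' := by
    cases h : (q.edges.map cap).min? with
    | none => exact absurd (List.min?_eq_none_iff.mp h) hq'
    | some m => exact ⟨m, rfl⟩
  rw [real_min?_eq_some_iff] at hm hm'
  have hmem : m' ∈ p.edges.map cap := by
    obtain ⟨e, he, rfl⟩ := List.mem_map.mp hm'.1
    exact List.mem_map.mpr ⟨e, hsub he, rfl⟩
  have : m ≤ m' := hm.2 _ hmem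
  simp only [bottleneck]
  rw [(real_min?_eq_some_iff _ _).mpr hm, (real_min?_eq_some_iff _ _).mpr hm']
  simpa using this

/-- With unit edge costs (cost of a walk = its length) and `u ≠ v`, the Pareto
frontier of the (length, bottleneck) pairs of walks from `u` to `v` has at most
`n - 1` elements, where `n = |V|`. -/
theorem Pareto_unit_card_le {V : Type*} [Fintype V] (G : SimpleGraph V)
    (cap : Sym2 V → ℝ) {u v : V} (huv : u ≠ v) :
    (Pareto {x : ℕ × ℝ | ∃ p : G.Walk u v, p.edges ≠ [] ∧
        x = (p.length, bottleneck cap p)}).Finite ∧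
    (Pareto {x : ℕ × ℝ | ∃ p : G.Walk u v, p.edges ≠ [] ∧
        x = (p.length, bottleneck cap p)}).ncard ≤ Fintype.card V - 1 := by
  classical
  set A : Set (ℕ × ℝ) := {x : ℕ × ℝ | ∃ p : G.Walk u v, p.edges ≠ [] ∧
      x = (p.length, bottleneck cap p)} with hA
  -- every Pareto element has first coordinate in [1, n-1]
  have key : ∀ x ∈ Pareto A, 1 ≤ x.1 ∧ x.1 ≤ Fintype.card V - 1 := by
    rintro ⟨d, f⟩ ⟨⟨p, hp, hx⟩, hnd⟩
    have hx1 : d = p.length := congrArg Prod.fst hx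
    have hx2 : f = bottleneck cap p := congrArg Prod.snd hx
    set q := p.bypass with hqdef
    have hqpath : q.IsPath := p.bypass_isPath
    have hqnil : ¬ q.Nil := SimpleGraph.Walk.not_nil_of_ne huv
    have hqlen : 1 ≤ q.length := by
      rcases Nat.pos_of_ne_zero (fun h => hqnil (SimpleGraph.Walk.nil_iff_length_eq.mpr h))
        with h
      exact h
    have hqe : q.edges ≠ [] := by
      intro h
      have := q.length_edges
      rw [h] at this
      simp at this
      omega
    have hy : (q.length, bottleneck cap q) ∈ A := ⟨q, hqe, rfl⟩
    have hle : q.length ≤ p.length := p.length_bypass_le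
    have hb : bottleneck cap p ≤ bottleneck cap q :=
      bottleneck_mono cap p q hqe (p.edges_bypass_subset)
    have heq : (q.length, bottleneck cap q) = (d, f) := by
      by_contra h
      exact hnd ⟨_, hy, h, by rw [hx1]; exact hle, by rw [hx2]; exact hb⟩
    have hd : d = q.length := (congrArg Prod.fst heq).symm
    have hlt : q.length < Fintype.card V := hqpath.length_lt
    constructor
    · omega
    · omega
  -- first projection is injective on the Pareto set
  have hinj : Set.InjOn Prod.fst (Pareto A) := by
    rintro ⟨d, f⟩ hx ⟨d', f'⟩ hy (h : d = d')
    subst h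
    by_contra hne
    have hff : f ≠ f' := fun h => hne (by rw [h])
    rcases lt_or_gt_of_ne hff with hlt | hgt
    · exact hx.2 ⟨(d, f'), hy.1, by simp [hff.symm], le_refl _, le_of_lt hlt⟩
    · exact hy.2 ⟨(d, f), hx.1, by simp [hff], le_refl _, le_of_lt hgt⟩
  have himg : Prod.fst '' Pareto A ⊆ ↑(Finset.Icc 1 (Fintype.card V - 1)) := by
    rintro d ⟨x, hx, rfl⟩
    simp only [Finset.coe_Icc, Set.mem_Icc]
    exact key x hx
  have hfin : (Prod.fst '' Pareto A).Finite :=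
    Set.Finite.subset (Finset.Icc 1 (Fintype.card V - 1)).finite_toSet himg
  have hPfin : (Pareto A).Finite := Set.Finite.of_finite_image hfin hinj
  refine ⟨hPfin, ?_⟩
  calc (Pareto A).ncard = (Prod.fst '' Pareto A).ncard :=
        (Set.ncard_image_of_injOn hinj).symm
    _ ≤ (↑(Finset.Icc 1 (Fintype.card V - 1)) : Set ℕ).ncard :=
        Set.ncard_le_ncard himg (Finset.Icc 1 (Fintype.card V - 1)).finite_toSet
    _ = Fintype.card V - 1 := by
        rw [Set.ncard_coe_finset, Nat.card_Icc]; omega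
end

section
/- Fix vertices u ≠ v. Let A_{u,v} = {(cost(p), bottleneck(p)) : p a walk from u to v with at least one edge} and let B_{u,v} = {(cost(p), bottleneck(p)) : p a path from u to v with at least one edge} (walks with no repeated vertices). Then the Pareto frontiers coincide: P(A_{u,v}) = P(B_{u,v}). In particular every useful (d, f) pair is realized by a simple path of cost exactly d and bottleneck exactly f. -/
open SimpleGraph

/-- helper: `min?.getD 0` is antitone under subset for nonempty lists of reals -/
lemma min?_getD_anti {l₁ l₂ : List ℝ} (h1 : l₁ ≠ []) (hsub : l₁ ⊆ l₂) :
    (l₂.min?).getD 0 ≤ (l₁.min?).getD 0 := by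
  haveI : Std.Antisymm (fun a b : ℝ => a ≤ b) := ⟨fun _ _ h h' => le_antisymm h h'⟩
  have h2 : l₂ ≠ [] := fun h => h1 (List.eq_nil_of_subset_nil (h ▸ hsub))
  obtain ⟨a, ha⟩ := Option.ne_none_iff_exists'.mp
    (fun h => h1 (List.min?_eq_none_iff.mp h))
  obtain ⟨c, hc⟩ := Option.ne_none_iff_exists'.mp
    (fun h => h2 (List.min?_eq_none_iff.mp h))
  have hmem : a ∈ l₁ := List.min?_mem ha
  have hle : ∀ b ∈ l₂, c ≤ b :=
    (List.min?_eq_some_iff.mp hc).2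
  rw [ha, hc]
  exact hle a (hsub hmem)

/-- The edges of `dropUntil` form a sublist of the edges. -/
lemma edges_dropUntil_sublist {V : Type*} [DecidableEq V] {G : SimpleGraph V}
    {u v w : V} (p : G.Walk v w) (h : u ∈ p.support) :
    (p.dropUntil u h).edges.Sublist p.edges := by
  conv_rhs => rw [← SimpleGraph.Walk.take_spec p h]
  rw [SimpleGraph.Walk.edges_append]
  exact List.sublist_append_right _ _

/-- The edges of the bypass walk form a sublist of the edges. -/
lemma edges_bypass_sublist {V : Type*} [DecidableEq V] {G : SimpleGraph V}
    {u v : V} (p : G.Walk u v) : p.bypass.edges.Sublist p.edges := by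
  induction p with
  | nil => exact List.Sublist.refl _
  | cons h p ih =>
    rw [SimpleGraph.Walk.bypass]
    split_ifs with hs
    · exact ((edges_dropUntil_sublist _ hs).trans ih).trans (List.sublist_cons_self _ _)
    · rw [SimpleGraph.Walk.edges_cons, SimpleGraph.Walk.edges_cons]
      exact ih.cons₂ _

/-- For `u ≠ v`, the Pareto frontier of the (cost, bottleneck) pairs of walks
from `u` to `v` coincides with that of the simple paths from `u` to `v`; every
useful pair is realized by a simple path. -/
theorem Pareto_walks_eq_Pareto_paths {V : Type*} [Fintype V] (G : SimpleGraph V)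
    (cost : Sym2 V → ℕ) (cap : Sym2 V → ℝ) {u v : V} (huv : u ≠ v) :
    Pareto {x : ℕ × ℝ | ∃ p : G.Walk u v, p.edges ≠ [] ∧
        x = (walkCost cost p, bottleneck cap p)} =
    Pareto {x : ℕ × ℝ | ∃ p : G.Walk u v, p.IsPath ∧ p.edges ≠ [] ∧
        x = (walkCost cost p, bottleneck cap p)} := by
  classical
  set A : Set (ℕ × ℝ) := {x : ℕ × ℝ | ∃ p : G.Walk u v, p.edges ≠ [] ∧
      x = (walkCost cost p, bottleneck cap p)} with hA
  set B : Set (ℕ × ℝ) := {x : ℕ × ℝ | ∃ p : G.Walk u v, p.IsPath ∧ p.edges ≠ [] ∧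
      x = (walkCost cost p, bottleneck cap p)} with hB
  have hBA : B ⊆ A := fun x ⟨p, _, h2, h3⟩ => ⟨p, h2, h3⟩
  -- every element of A is weakly dominated by an element of B
  have hdom : ∀ a ∈ A, ∃ b ∈ B, b.1 ≤ a.1 ∧ a.2 ≤ b.2 := by
    rintro a ⟨p, hpe, rfl⟩
    have hsub : p.bypass.edges.Sublist p.edges := edges_bypass_sublist p
    have hbe : p.bypass.edges ≠ [] := by
      intro h
      exact huv (SimpleGraph.Walk.eq_of_length_eq_zero (p := p.bypass)
        (by simp [← SimpleGraph.Walk.length_edges, h]))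
    refine ⟨(walkCost cost p.bypass, bottleneck cap p.bypass),
      ⟨p.bypass, p.bypass_isPath, hbe, rfl⟩, ?_, ?_⟩
    · exact (hsub.map cost).sum_le_sum (fun a _ => Nat.zero_le a)
    · exact min?_getD_anti (by simpa using hbe) (List.map_subset cap hsub.subset)
  ext x
  constructor
  · rintro ⟨hxA, hnd⟩
    obtain ⟨b, hbB, hb1, hb2⟩ := hdom x hxA
    have hbx : b = x := by
      by_contra hne
      exact hnd ⟨b, hBA hbB, hne, hb1, hb2⟩
    refine ⟨hbx ▸ hbB, fun ⟨y, hyB, hy⟩ => hnd ⟨y, hBA hyB, hy⟩⟩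
  · rintro ⟨hxB, hnd⟩
    refine ⟨hBA hxB, ?_⟩
    rintro ⟨y, hyA, hyx, hy1, hy2⟩
    obtain ⟨b, hbB, hb1, hb2⟩ := hdom y hyA
    by_cases hbx : b = x
    · subst hbx
      exact hyx (Prod.ext (le_antisymm hy1 hb1) (le_antisymm hb2 hy2))
    · exact hnd ⟨b, hbB, hbx, hb1.trans hy1, hy2.trans hb2⟩
end

section
/- Fix vertices u ≠ v and a real number f. Let C_f = {cap(e) : e ∈ E(G), f ≤ cap(e)} be the set of capacity values at least f. If C_f is nonempty then D_{u,v}(f) = D_{u,v}(min C_f); if C_f is empty then D_{u,v}(f) = ⊤. (Hence to solve the shortest paths for all flows problem it suffices to solve the shortest paths problem once for each of the at most m distinct capacity values, the 'maximal flows'.) -/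
open SimpleGraph

/-- Let `C_f` be the set of capacity values at least `f`. If `C_f` is nonempty
then the shortest distance for flow `f` equals that for flow `min C_f`
(the least such capacity value); if `C_f` is empty then it is `⊤`. -/
theorem D_eq_D_min_cap {V : Type*} [Fintype V] (G : SimpleGraph V)
    (cost : Sym2 V → ℕ) (cap : Sym2 V → ℝ) {u v : V} (huv : u ≠ v) (f : ℝ) :
    ((cap '' {e ∈ G.edgeSet | f ≤ cap e}).Nonempty →
      D G cost cap u v f = D G cost cap u v (sInf (cap '' {e ∈ G.edgeSet | f ≤ cap e}))) ∧
    (cap '' {e ∈ G.edgeSet | f ≤ cap e} = ∅ → D G cost cap u v f = ⊤) := by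
  set C : Set ℝ := cap '' {e ∈ G.edgeSet | f ≤ cap e} with hC
  have hCfin : C.Finite := Set.Finite.image cap (Set.toFinite _)
  constructor
  · intro hne
    set m := sInf C with hm
    have hmem : m ∈ C := hne.csInf_mem hCfin
    have hfm : f ≤ m := by
      apply le_csInf hne
      rintro x ⟨e, ⟨-, hfe⟩, rfl⟩
      exact hfe
    have hiff : ∀ p : G.Walk u v,
        (∀ e ∈ p.edges, f ≤ cap e) ↔ (∀ e ∈ p.edges, m ≤ cap e) := by
      intro p
      constructor
      · intro hp e he
        exact csInf_le hCfin.bddBelow ⟨e, ⟨p.edges_subset_edgeSet he, hp e he⟩, rfl⟩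
      · intro hp e he
        exact hfm.trans (hp e he)
    apply le_antisymm
    · refine le_iInf ?_
      rintro ⟨p, hp⟩
      exact iInf_le_of_le ⟨p, (hiff p).mpr hp⟩ le_rfl
    · refine le_iInf ?_
      rintro ⟨p, hp⟩
      exact iInf_le_of_le ⟨p, (hiff p).mp hp⟩ le_rfl
  · intro hempty
    have : IsEmpty {p : G.Walk u v // ∀ e ∈ p.edges, f ≤ cap e} := by
      constructor
      rintro ⟨p, hp⟩
      cases p with
      | nil => exact huv rfl
      | cons h q =>
        rename_i w
        have he : s(u, w) ∈ (SimpleGraph.Walk.cons h q).edges := by simp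
        have : cap s(u, w) ∈ C :=
          ⟨s(u, w), ⟨(SimpleGraph.Walk.cons h q).edges_subset_edgeSet he, hp _ he⟩, rfl⟩
        rw [hempty] at this
        exact this
    exact iInf_of_empty _
end
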